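/- Let n ≥ 1, let α be a primitive element of 𝔽_{2^n}, λ ∈ 𝔽_{2^n}ˣ, and s_t = Tr_{𝔽_{2^n}/𝔽₂}(λ α^t). For 1 ≤ t ≤ 2^n − 1 let G_t ∈ 𝔽₂^{n×t} have entries (G_t)_{i,j} = s_{i+j−2} for 1 ≤ i ≤ n, 1 ≤ j ≤ t. Then G_t = V Λ G̃_t, where V ∈ 𝔽_{2^n}^{n×n} has entries V_{i,ℓ} = α^{2^{ℓ−1}(i−1)}, Λ = diag(λ, λ², …, λ^{2^{n−1}}), and G̃_t ∈ 𝔽_{2^n}^{n×t} has entries (G̃_t)_{ℓ,j} = α^{2^{ℓ−1}(j−1)}. Consequently rank(G_t) = min{t, n}. -/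

import Mathlib

open Matrix

private lemma stmt17_pow2_inj {F : Type*} [Field F] {n : ℕ}
    (α : F) (hα0 : α ≠ 0) (hα : orderOf α = 2 ^ n - 1)
    {ℓ k : ℕ} (hℓ : ℓ < n) (hk : k < n) (h : α ^ (2 ^ ℓ) = α ^ (2 ^ k)) : ℓ = k := by
  have key : ∀ {a b : ℕ}, a < n → b < n → a < b → α ^ (2 ^ a) = α ^ (2 ^ b) → False := by
    intro a b ha hb hab hpow
    have hlt : 2 ^ a < 2 ^ b := Nat.pow_lt_pow_right (by norm_num) hab
    have h1 : α ^ (2 ^ a) * α ^ (2 ^ b - 2 ^ a) = α ^ (2 ^ a) * 1 := by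
      rw [← pow_add, mul_one, hpow]
      congr 1
      omega
    have h2 := mul_left_cancel₀ (pow_ne_zero _ hα0) h1
    have h3 : 2 ^ n - 1 ∣ 2 ^ b - 2 ^ a := hα ▸ orderOf_dvd_of_pow_eq_one h2
    have h4 : 2 ^ n - 1 ≤ 2 ^ b - 2 ^ a := Nat.le_of_dvd (by omega) h3
    have h5 : 2 ^ b ≤ 2 ^ (n - 1) := Nat.pow_le_pow_right (by norm_num) (by omega)
    have h6 : 2 ^ (n - 1) * 2 = 2 ^ n := by rw [← pow_succ]; congr 1; omega
    have h7 : 1 ≤ 2 ^ (n - 1) := Nat.one_le_two_pow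
    have h9 : 1 ≤ 2 ^ a := Nat.one_le_two_pow
    omega
  rcases Nat.lt_trichotomy ℓ k with hc | hc | hc
  · exact absurd h (fun hh => key hℓ hk hc hh)
  · exact hc
  · exact absurd h.symm (fun hh => key hk hℓ hc hh)

private lemma stmt17_zmod2_sq : ∀ r : ZMod 2, r ^ 2 = r := by decide

private lemma stmt17_trace {n : ℕ} (F : Type*) [Field F] [Fintype F]
    [Algebra (ZMod 2) F] (hcard : Fintype.card F = 2 ^ n)
    (α : F) (hα0 : α ≠ 0) (hα : orderOf α = 2 ^ n - 1) (x : F) :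
    algebraMap (ZMod 2) F (Algebra.trace (ZMod 2) F x) = ∑ ℓ : Fin n, x ^ (2 ^ (ℓ : ℕ)) := by
  haveI : Fact (Nat.Prime 2) := ⟨Nat.prime_two⟩
  haveI : CharP F 2 := (Algebra.charP_iff (ZMod 2) F 2).mp (ZMod.charP 2)
  let φh : F →ₐ[ZMod 2] F :=
    { frobenius F 2 with
      commutes' := fun r => by
        show frobenius F 2 (algebraMap (ZMod 2) F r) = algebraMap (ZMod 2) F r
        rw [frobenius_def, ← map_pow, stmt17_zmod2_sq r] }
  let φ : F ≃ₐ[ZMod 2] F := AlgEquiv.ofBijective φh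
    (Finite.injective_iff_bijective.mp (frobenius_inj F 2))
  have hφ : ∀ y : F, φ y = y ^ 2 := fun y => rfl
  have hφpow : ∀ (ℓ : ℕ) (y : F), (φ ^ ℓ) y = y ^ (2 ^ ℓ) := by
    intro ℓ
    induction ℓ with
    | zero => intro y; simp
    | succ m ih =>
      intro y
      rw [pow_succ, AlgEquiv.mul_apply, hφ, ih, ← pow_mul]
      congr 1
      ring
  have hfr : Module.finrank (ZMod 2) F = n := by
    have h1 : Fintype.card F = Fintype.card (ZMod 2) ^ Module.finrank (ZMod 2) F :=
      Module.card_eq_pow_finrank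
    rw [ZMod.card, hcard] at h1
    exact (Nat.pow_right_injective le_rfl h1.symm)
  have hcardaut : Fintype.card (F ≃ₐ[ZMod 2] F) = n := by
    rw [← Nat.card_eq_fintype_card, IsGalois.card_aut_eq_finrank, hfr]
  have hinj : Function.Injective (fun ℓ : Fin n => φ ^ (ℓ : ℕ)) := by
    intro a b hab
    simp only at hab
    have h2 : α ^ (2 ^ (a : ℕ)) = α ^ (2 ^ (b : ℕ)) := by
      rw [← hφpow, ← hφpow, hab]
    exact Fin.ext (stmt17_pow2_inj α hα0 hα a.isLt b.isLt h2)
  let e : Fin n ≃ (F ≃ₐ[ZMod 2] F) := Equiv.ofBijective _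
    ((Fintype.bijective_iff_injective_and_card _).mpr ⟨hinj, by simp [hcardaut]⟩)
  rw [trace_eq_sum_automorphisms, ← Equiv.sum_comp e (fun σ => σ x)]
  exact Finset.sum_congr rfl fun ℓ _ => hφpow ℓ x

private lemma stmt17_rank_row_le {F : Type*} [Field F] {m l nn : Type*} [Fintype nn]
    (A : Matrix m nn F) (f : l → m) : (A.submatrix f id).rank ≤ A.rank := by
  rw [Matrix.rank, Matrix.rank]
  have h : (A.submatrix f id).mulVecLin = (LinearMap.funLeft F F f).comp A.mulVecLin := by
    ext v i
    rfl
  rw [h, LinearMap.range_comp]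
  exact Submodule.finrank_map_le _ _

private lemma stmt17_rank_col_le {F : Type*} [Field F] {m nn l : Type*} [Fintype m] [Fintype nn]
    [Fintype l] (A : Matrix m nn F) (g : l → nn) : (A.submatrix id g).rank ≤ A.rank := by
  rw [← Matrix.rank_transpose (A.submatrix id g), ← Matrix.rank_transpose A]
  have h : (A.submatrix id g)ᵀ = Aᵀ.submatrix g id := rfl
  rw [h]
  exact stmt17_rank_row_le _ _

/-- Vandermonde-type factorization of the observability matrix of a binary m-sequence:
with `s_t = Tr_{𝔽_{2^n}/𝔽₂}(λ α^t)` for a primitive element `α` and `λ ≠ 0`, the matrix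
`(G_t)_{i,j} = s_{i+j-2}` (viewed in `𝔽_{2^n}`) factors as `G_t = V Λ G̃_t` where
`V_{i,ℓ} = α^{2^{ℓ-1}(i-1)}`, `Λ = diag(λ, λ², …, λ^{2^{n-1}})`, and
`(G̃_t)_{ℓ,j} = α^{2^{ℓ-1}(j-1)}`; consequently `rank G_t = min t n`. -/
theorem stmt17 {n : ℕ} (hn : 1 ≤ n) (F : Type*) [Field F] [Fintype F]
    [Algebra (ZMod 2) F] (hcard : Fintype.card F = 2 ^ n)
    (α : F) (hα : orderOf α = 2 ^ n - 1)
    (lam : F) (hlam : lam ≠ 0)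
    (t : ℕ) (ht1 : 1 ≤ t) (ht2 : t ≤ 2 ^ n - 1)
    (Gmat : Matrix (Fin n) (Fin t) F)
    (hG : ∀ (i : Fin n) (j : Fin t), Gmat i j
        = algebraMap (ZMod 2) F (Algebra.trace (ZMod 2) F (lam * α ^ ((i : ℕ) + (j : ℕ)))))
    (V : Matrix (Fin n) (Fin n) F)
    (hV : ∀ (i ℓ : Fin n), V i ℓ = α ^ (2 ^ (ℓ : ℕ) * (i : ℕ)))
    (Gt : Matrix (Fin n) (Fin t) F)
    (hGt : ∀ (ℓ : Fin n) (j : Fin t), Gt ℓ j = α ^ (2 ^ (ℓ : ℕ) * (j : ℕ))) :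
    Gmat = V * Matrix.diagonal (fun ℓ : Fin n => lam ^ (2 ^ (ℓ : ℕ))) * Gt ∧
    Gmat.rank = min t n := by
  have hα0 : α ≠ 0 := by
    intro h0
    have h1 : α ^ (2 ^ n - 1) = 1 := hα ▸ pow_orderOf_eq_one α
    have h2 : 1 < 2 ^ n := Nat.one_lt_two_pow_iff.mpr (by omega)
    rw [h0, zero_pow (by omega)] at h1
    exact zero_ne_one h1
  -- the factorization
  have hfact : Gmat = V * Matrix.diagonal (fun ℓ : Fin n => lam ^ (2 ^ (ℓ : ℕ))) * Gt := by
    ext i j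
    rw [hG, stmt17_trace F hcard α hα0 hα, Matrix.mul_apply]
    apply Finset.sum_congr rfl
    intro ℓ _
    rw [Matrix.mul_diagonal, hV, hGt, mul_pow, ← pow_mul,
      show ((i : ℕ) + (j : ℕ)) * 2 ^ (ℓ : ℕ) = 2 ^ (ℓ : ℕ) * (i : ℕ) + 2 ^ (ℓ : ℕ) * (j : ℕ) by
        ring,
      pow_add]
    ring
  refine ⟨hfact, ?_⟩
  -- invertibility of V * Λ
  have hVvdm : V = (Matrix.vandermonde (fun ℓ : Fin n => α ^ (2 ^ (ℓ : ℕ))))ᵀ := by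
    ext i ℓ
    rw [hV, Matrix.transpose_apply, Matrix.vandermonde_apply, ← pow_mul]
  have hnodes : Function.Injective (fun ℓ : Fin n => α ^ (2 ^ (ℓ : ℕ))) := by
    intro a b hab
    exact Fin.ext (stmt17_pow2_inj α hα0 hα a.isLt b.isLt hab)
  have hVdet : V.det ≠ 0 := by
    rw [hVvdm, Matrix.det_transpose]
    exact Matrix.det_vandermonde_ne_zero_iff.mpr hnodes
  have hDdet : (Matrix.diagonal (fun ℓ : Fin n => lam ^ (2 ^ (ℓ : ℕ)))).det ≠ 0 := by
    rw [Matrix.det_diagonal]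
    exact Finset.prod_ne_zero_iff.mpr fun ℓ _ => pow_ne_zero _ hlam
  have hunit : IsUnit (V * Matrix.diagonal (fun ℓ : Fin n => lam ^ (2 ^ (ℓ : ℕ)))).det := by
    rw [Matrix.det_mul]
    exact isUnit_iff_ne_zero.mpr (mul_ne_zero hVdet hDdet)
  rw [hfact, Matrix.rank_mul_eq_right_of_isUnit_det _ _ hunit]
  -- rank of the Vandermonde-type matrix Gt
  apply le_antisymm
  · apply le_min
    · have := Matrix.rank_le_card_width Gt
      simpa using this
    · have := Matrix.rank_le_card_height Gt
      simpa using this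
  · rcases le_total t n with hle | hle
    · -- t ≤ n : first t rows form an invertible t × t Vandermonde
      rw [min_eq_left hle]
      have hsub : Gt.submatrix (Fin.castLE hle) id
          = Matrix.vandermonde (fun ℓ : Fin t => α ^ (2 ^ (ℓ : ℕ))) := by
        ext ℓ j
        rw [Matrix.submatrix_apply, id_eq, hGt, Matrix.vandermonde_apply, ← pow_mul]
        rfl
      have hdet : (Gt.submatrix (Fin.castLE hle) id).det ≠ 0 := by
        rw [hsub]
        apply Matrix.det_vandermonde_ne_zero_iff.mpr
        intro a b hab
        exact Fin.ext (stmt17_pow2_inj α hα0 hα (lt_of_lt_of_le a.isLt hle)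
          (lt_of_lt_of_le b.isLt hle) hab)
      have hr : (Gt.submatrix (Fin.castLE hle) id).rank = t := by
        rw [Matrix.rank_of_isUnit _ ((Matrix.isUnit_iff_isUnit_det _).mpr
          (isUnit_iff_ne_zero.mpr hdet))]
        simp
      calc t = (Gt.submatrix (Fin.castLE hle) id).rank := hr.symm
        _ ≤ Gt.rank := stmt17_rank_row_le _ _
    · -- n ≤ t : first n columns form an invertible n × n Vandermonde
      rw [min_eq_right hle]
      have hsub : Gt.submatrix id (Fin.castLE hle)
          = Matrix.vandermonde (fun ℓ : Fin n => α ^ (2 ^ (ℓ : ℕ))) := by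
        ext ℓ j
        rw [Matrix.submatrix_apply, id_eq, hGt, Matrix.vandermonde_apply, ← pow_mul]
        rfl
      have hdet : (Gt.submatrix id (Fin.castLE hle)).det ≠ 0 := by
        rw [hsub]
        exact Matrix.det_vandermonde_ne_zero_iff.mpr hnodes
      have hr : (Gt.submatrix id (Fin.castLE hle)).rank = n := by
        rw [Matrix.rank_of_isUnit _ ((Matrix.isUnit_iff_isUnit_det _).mpr
          (isUnit_iff_ne_zero.mpr hdet))]
        simp
      calc n = (Gt.submatrix id (Fin.castLE hle)).rank := hr.symm
        _ ≤ Gt.rank := stmt17_rank_col_le _ _
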